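/- Fix ρ, λ ∈ [0,1] and R2 ∈ ℝ. Let (P,P') be a pair of joint pmfs on 𝒳1×𝒳2×𝒴1 such that P_{X̂2,Ŷ1} = P_{X̂2',Ŷ1'} and I(X̂2;Ŷ1) = R2, where I(X̂2;Ŷ1) is computed under P. Then f1(ρ,λ,P,P') = f2(ρ,λ,P,P'). -/

import Mathlib

open Finset

section InfoDefs

variable {Ω : Type*} [Fintype Ω]

/-- A probability mass function on a finite type. -/
def IsPMF {α : Type*} [Fintype α] (p : α → ℝ) : Prop :=
  (∀ a, 0 ≤ p a) ∧ ∑ a, p a = 1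

/-- Pushforward of `P` along `f` (the pmf of the random variable `f`). -/
noncomputable def pushf {α : Type*} [Fintype α] [DecidableEq α]
    (P : Ω → ℝ) (f : Ω → α) (a : α) : ℝ :=
  ∑ ω, if f ω = a then P ω else 0

/-- Entropy of the random variable `f` under `P`. -/
noncomputable def entH {α : Type*} [Fintype α] [DecidableEq α]
    (P : Ω → ℝ) (f : Ω → α) : ℝ :=
  -∑ a, pushf P f a * Real.log (pushf P f a)

/-- Conditional entropy `H(g | f)` under `P`. -/
noncomputable def condEnt {α β : Type*} [Fintype α] [DecidableEq α] [Fintype β] [DecidableEq β]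
    (P : Ω → ℝ) (f : Ω → α) (g : Ω → β) : ℝ :=
  -∑ a, ∑ b, pushf P (fun ω => (f ω, g ω)) (a, b) *
      Real.log (pushf P (fun ω => (f ω, g ω)) (a, b) / pushf P f a)

/-- Mutual information `I(f;g)` under `P`. -/
noncomputable def mutI {α β : Type*} [Fintype α] [DecidableEq α] [Fintype β] [DecidableEq β]
    (P : Ω → ℝ) (f : Ω → α) (g : Ω → β) : ℝ :=
  ∑ a, ∑ b, pushf P (fun ω => (f ω, g ω)) (a, b) *
      Real.log (pushf P (fun ω => (f ω, g ω)) (a, b) / (pushf P f a * pushf P g b))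

/-- Conditional mutual information `I(f;g|h)` under `P`. -/
noncomputable def condMutI {α β γ : Type*} [Fintype α] [DecidableEq α] [Fintype β]
    [DecidableEq β] [Fintype γ] [DecidableEq γ]
    (P : Ω → ℝ) (f : Ω → α) (g : Ω → β) (h : Ω → γ) : ℝ :=
  ∑ a, ∑ b, ∑ c, pushf P (fun ω => (f ω, g ω, h ω)) (a, b, c) *
      Real.log (pushf P (fun ω => (f ω, g ω, h ω)) (a, b, c) * pushf P h c /
        (pushf P (fun ω => (f ω, h ω)) (a, c) * pushf P (fun ω => (g ω, h ω)) (b, c)))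

end InfoDefs
section IFC

variable {X1 X2 Y1 : Type*} [Fintype X1] [DecidableEq X1] [Fintype X2] [DecidableEq X2]
  [Fintype Y1] [DecidableEq Y1]

/-- The function `g(ρ,λ,P,P')`. -/
noncomputable def gFun (q1 : X1 → X2 → Y1 → ℝ) (ρ lam : ℝ)
    (P P' : X1 × X2 × Y1 → ℝ) : ℝ :=
  -(1 - ρ * lam) * (∑ z, P z * Real.log (q1 z.1 z.2.1 z.2.2))
    - ρ * lam * (∑ z, P' z * Real.log (q1 z.1 z.2.1 z.2.2))

/-- The function `f1(ρ,λ,P,P')`. -/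
noncomputable def f1Fun (q1 : X1 → X2 → Y1 → ℝ) (R2 ρ lam : ℝ)
    (P P' : X1 × X2 × Y1 → ℝ) : ℝ :=
  gFun q1 ρ lam P P'
    - condEnt P (fun z => z.1) (fun z => z.2.2)
    + ρ * mutI P' (fun z => z.1) (fun z => z.2.2)
    + max (mutI P (fun z => z.2.1) (fun z => (z.1, z.2.2)) - R2)
        ((1 - ρ * lam) * (mutI P (fun z => z.2.1) (fun z => (z.1, z.2.2)) - R2))
    + max (max ((1 - ρ) * mutI P' (fun z => z.2.1) (fun z => z.2.2)
            + ρ * mutI P' (fun z => z.2.1) (fun z => (z.1, z.2.2)) - R2)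
          (ρ * (mutI P' (fun z => z.2.1) (fun z => (z.1, z.2.2)) - R2)))
        (ρ * lam * (mutI P' (fun z => z.2.1) (fun z => (z.1, z.2.2)) - R2))

/-- The function `f2(ρ,λ,P,P')`. -/
noncomputable def f2Fun (q1 : X1 → X2 → Y1 → ℝ) (R2 ρ lam : ℝ)
    (P P' : X1 × X2 × Y1 → ℝ) : ℝ :=
  gFun q1 ρ lam P P'
    - condEnt P (fun z => z.1) (fun z => z.2.2)
    + ρ * mutI P' (fun z => z.1) (fun z => (z.2.1, z.2.2))
    + mutI P (fun z => z.2.1) (fun z => (z.1, z.2.2)) - R2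

/-- The constraint set `S1(Q1,Q2)`. -/
def S1set (Y1 : Type*) [Fintype Y1] [DecidableEq Y1] (Q1 : X1 → ℝ) (Q2 : X2 → ℝ) :
    Set ((X1 × X2 × Y1 → ℝ) × (X1 × X2 × Y1 → ℝ)) :=
  {PP | IsPMF PP.1 ∧ IsPMF PP.2 ∧
    pushf PP.1 (fun z => z.2.2) = pushf PP.2 (fun z => z.2.2) ∧
    pushf PP.1 (fun z => z.1) = Q1 ∧ pushf PP.2 (fun z => z.1) = Q1 ∧
    pushf PP.1 (fun z => z.2.1) = Q2 ∧ pushf PP.2 (fun z => z.2.1) = Q2}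

/-- The constraint set `S2(Q1,Q2,R2)`. -/
def S2set (Y1 : Type*) [Fintype Y1] [DecidableEq Y1] (Q1 : X1 → ℝ) (Q2 : X2 → ℝ) (R2 : ℝ) :
    Set ((X1 × X2 × Y1 → ℝ) × (X1 × X2 × Y1 → ℝ)) :=
  {PP | IsPMF PP.1 ∧ IsPMF PP.2 ∧
    pushf PP.1 (fun z => z.1) = Q1 ∧ pushf PP.2 (fun z => z.1) = Q1 ∧
    pushf PP.1 (fun z => z.2.1) = Q2 ∧ pushf PP.2 (fun z => z.2.1) = Q2 ∧
    R2 ≤ mutI PP.1 (fun z => z.2.1) (fun z => z.2.2) ∧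
    pushf PP.1 (fun z => (z.2.1, z.2.2)) = pushf PP.2 (fun z => (z.2.1, z.2.2))}

/-- The error exponent `E_{R,1}(R1,R2,Q1,Q2,ρ,λ)` (with `+∞` for infima over empty sets). -/
noncomputable def ER1 (q1 : X1 → X2 → Y1 → ℝ) (R1 R2 : ℝ) (Q1 : X1 → ℝ) (Q2 : X2 → ℝ)
    (ρ lam : ℝ) : EReal :=
  ((R2 - ρ * R1 : ℝ) : EReal) +
    min (⨅ PP : S1set Y1 Q1 Q2, ((f1Fun q1 R2 ρ lam PP.1.1 PP.1.2 : ℝ) : EReal))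
        (⨅ PP : S2set Y1 Q1 Q2 R2, ((f2Fun q1 R2 ρ lam PP.1.1 PP.1.2 : ℝ) : EReal))

end IFC

section MyAux

variable {Ω : Type*} [Fintype Ω] {α β γ : Type*} [Fintype α] [DecidableEq α]
  [Fintype β] [DecidableEq β] [Fintype γ] [DecidableEq γ]

lemma pushf_nonneg (P : Ω → ℝ) (hP : ∀ ω, 0 ≤ P ω) (f : Ω → α) (a : α) :
    0 ≤ pushf P f a :=
  Finset.sum_nonneg fun ω _ => by split <;> simp [hP ω]

lemma le_pushf (P : Ω → ℝ) (hP : ∀ ω, 0 ≤ P ω) (f : Ω → α) (ω : Ω) :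
    P ω ≤ pushf P f (f ω) := by
  classical
  have h := Finset.single_le_sum (f := fun ω' => if f ω' = f ω then P ω' else 0)
    (fun ω' _ => by split <;> simp [hP ω']) (Finset.mem_univ ω)
  simpa [pushf] using h

lemma pushf_inj (P : Ω → ℝ) (f : Ω → α) (hf : Function.Injective f) (ω : Ω) :
    pushf P f (f ω) = P ω := by
  classical
  unfold pushf
  rw [Finset.sum_eq_single ω]
  · simp
  · intro b _ hb; simp [hf.ne hb]
  · simp

lemma sum_pushf_mul (P : Ω → ℝ) (f : Ω → α) (F : α → ℝ) :
    ∑ a, pushf P f a * F a = ∑ ω, P ω * F (f ω) := by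
  classical
  unfold pushf
  simp only [Finset.sum_mul, ite_mul, zero_mul]
  rw [Finset.sum_comm]
  refine Finset.sum_congr rfl fun ω _ => ?_
  simp [Finset.sum_ite_eq]

lemma sum_pushf_total (P : Ω → ℝ) (f : Ω → α) :
    ∑ a, pushf P f a = ∑ ω, P ω := by
  classical
  unfold pushf
  rw [Finset.sum_comm]
  refine Finset.sum_congr rfl fun ω _ => ?_
  simp [Finset.sum_ite_eq]

lemma sum_pushf_pair_left (P : Ω → ℝ) (f : Ω → α) (g : Ω → β) (b : β) :
    ∑ a, pushf P (fun ω => (f ω, g ω)) (a, b) = pushf P g b := by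
  classical
  unfold pushf
  rw [Finset.sum_comm]
  refine Finset.sum_congr rfl fun ω _ => ?_
  simp [Prod.ext_iff, ite_and, Finset.sum_ite_eq]

lemma sum_pushf_pair_right (P : Ω → ℝ) (f : Ω → α) (g : Ω → β) (a : α) :
    ∑ b, pushf P (fun ω => (f ω, g ω)) (a, b) = pushf P f a := by
  classical
  unfold pushf
  rw [Finset.sum_comm]
  refine Finset.sum_congr rfl fun ω _ => ?_
  by_cases h : f ω = a <;> simp [Prod.ext_iff, ite_and, h, Finset.sum_ite_eq]

lemma mutI_eq_sum (P : Ω → ℝ) (f : Ω → α) (g : Ω → β) :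
    mutI P f g = ∑ ω, P ω * Real.log (pushf P (fun ω => (f ω, g ω)) (f ω, g ω) /
      (pushf P f (f ω) * pushf P g (g ω))) := by
  rw [mutI]
  rw [show (∑ a, ∑ b, pushf P (fun ω => (f ω, g ω)) (a, b) *
      Real.log (pushf P (fun ω => (f ω, g ω)) (a, b) / (pushf P f a * pushf P g b)))
    = ∑ p : α × β, pushf P (fun ω => (f ω, g ω)) p *
      Real.log (pushf P (fun ω => (f ω, g ω)) p / (pushf P f p.1 * pushf P g p.2))
    from (Fintype.sum_prod_type (f := fun p : α × β => pushf P (fun ω => (f ω, g ω)) p *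
      Real.log (pushf P (fun ω => (f ω, g ω)) p / (pushf P f p.1 * pushf P g p.2)))).symm]
  exact sum_pushf_mul P (fun ω => (f ω, g ω))
    (fun p => Real.log (pushf P (fun ω => (f ω, g ω)) p / (pushf P f p.1 * pushf P g p.2)))

lemma logdiv {x y z : ℝ} (hx : 0 < x) (hy : 0 < y) (hz : 0 < z) :
    Real.log (x / (y * z)) = Real.log x - Real.log y - Real.log z := by
  rw [Real.log_div hx.ne' (by positivity), Real.log_mul hy.ne' hz.ne']
  ring

end MyAux

section MainAux

variable {X1 X2 Y1 : Type*} [Fintype X1] [DecidableEq X1] [Fintype X2] [DecidableEq X2]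
  [Fintype Y1] [DecidableEq Y1]

lemma chain3 (P : X1 × X2 × Y1 → ℝ) (hP : ∀ ω, 0 ≤ P ω) :
    mutI P (fun z => z.1) (fun z => z.2.2)
      + mutI P (fun z => z.2.1) (fun z => (z.1, z.2.2))
    = mutI P (fun z => z.2.1) (fun z => z.2.2)
      + mutI P (fun z => z.1) (fun z => (z.2.1, z.2.2)) := by
  simp only [mutI_eq_sum]
  rw [← Finset.sum_add_distrib, ← Finset.sum_add_distrib]
  refine Finset.sum_congr rfl fun ω _ => ?_
  rcases (hP ω).eq_or_lt with h0 | hpos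
  · rw [← h0]; ring
  · have e1 : pushf P (fun z : X1 × X2 × Y1 => (z.2.1, (z.1, z.2.2))) (ω.2.1, (ω.1, ω.2.2))
        = P ω := by
      have := pushf_inj P (fun z : X1 × X2 × Y1 => (z.2.1, (z.1, z.2.2)))
        (fun a b h => by
          simp only [Prod.ext_iff] at h
          exact Prod.ext h.2.1 (Prod.ext h.1 h.2.2)) ω
      simpa using this
    have e2 : pushf P (fun z : X1 × X2 × Y1 => (z.1, (z.2.1, z.2.2))) (ω.1, (ω.2.1, ω.2.2))
        = P ω := by
      have := pushf_inj P (fun z : X1 × X2 × Y1 => (z.1, (z.2.1, z.2.2)))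
        (fun a b h => by
          simp only [Prod.ext_iff] at h
          exact Prod.ext h.1 (Prod.ext h.2.1 h.2.2)) ω
      simpa using this
    have h1 : 0 < pushf P (fun z : X1 × X2 × Y1 => z.1) ω.1 :=
      lt_of_lt_of_le hpos (le_pushf P hP (fun z => z.1) ω)
    have h2 : 0 < pushf P (fun z : X1 × X2 × Y1 => z.2.1) ω.2.1 :=
      lt_of_lt_of_le hpos (le_pushf P hP (fun z => z.2.1) ω)
    have h3 : 0 < pushf P (fun z : X1 × X2 × Y1 => z.2.2) ω.2.2 :=
      lt_of_lt_of_le hpos (le_pushf P hP (fun z => z.2.2) ω)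
    have h13 : 0 < pushf P (fun z : X1 × X2 × Y1 => (z.1, z.2.2)) (ω.1, ω.2.2) :=
      lt_of_lt_of_le hpos (le_pushf P hP (fun z => (z.1, z.2.2)) ω)
    have h23 : 0 < pushf P (fun z : X1 × X2 × Y1 => (z.2.1, z.2.2)) (ω.2.1, ω.2.2) :=
      lt_of_lt_of_le hpos (le_pushf P hP (fun z => (z.2.1, z.2.2)) ω)
    rw [e1, e2, logdiv h13 h1 h3, logdiv hpos h2 h13, logdiv h23 h2 h3, logdiv hpos h1 h23]
    ring

lemma mono2 (P : X1 × X2 × Y1 → ℝ) (hP : IsPMF P) :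
    mutI P (fun z => z.2.1) (fun z => z.2.2)
      ≤ mutI P (fun z => z.2.1) (fun z => (z.1, z.2.2)) := by
  obtain ⟨hnn, hsum⟩ := hP
  have key : mutI P (fun z => z.2.1) (fun z => z.2.2)
      - mutI P (fun z => z.2.1) (fun z => (z.1, z.2.2))
      ≤ ∑ ω, ((if P ω = 0 then 0 else
          pushf P (fun z : X1 × X2 × Y1 => (z.1, z.2.2)) (ω.1, ω.2.2)
            * pushf P (fun z : X1 × X2 × Y1 => (z.2.1, z.2.2)) (ω.2.1, ω.2.2)
            / pushf P (fun z : X1 × X2 × Y1 => z.2.2) ω.2.2) - P ω) := by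
    simp only [mutI_eq_sum]
    rw [← Finset.sum_sub_distrib]
    refine Finset.sum_le_sum fun ω _ => ?_
    rcases (hnn ω).eq_or_lt with h0 | hpos
    · simp [← h0]
    · rw [if_neg hpos.ne']
      have e1 : pushf P (fun z : X1 × X2 × Y1 => (z.2.1, (z.1, z.2.2))) (ω.2.1, (ω.1, ω.2.2))
          = P ω := by
        have := pushf_inj P (fun z : X1 × X2 × Y1 => (z.2.1, (z.1, z.2.2)))
          (fun a b h => by
            simp only [Prod.ext_iff] at h
            exact Prod.ext h.2.1 (Prod.ext h.1 h.2.2)) ω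
        simpa using this
      have h2 : 0 < pushf P (fun z : X1 × X2 × Y1 => z.2.1) ω.2.1 :=
        lt_of_lt_of_le hpos (le_pushf P hnn (fun z => z.2.1) ω)
      have h3 : 0 < pushf P (fun z : X1 × X2 × Y1 => z.2.2) ω.2.2 :=
        lt_of_lt_of_le hpos (le_pushf P hnn (fun z => z.2.2) ω)
      have h13 : 0 < pushf P (fun z : X1 × X2 × Y1 => (z.1, z.2.2)) (ω.1, ω.2.2) :=
        lt_of_lt_of_le hpos (le_pushf P hnn (fun z => (z.1, z.2.2)) ω)
      have h23 : 0 < pushf P (fun z : X1 × X2 × Y1 => (z.2.1, z.2.2)) (ω.2.1, ω.2.2) :=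
        lt_of_lt_of_le hpos (le_pushf P hnn (fun z => (z.2.1, z.2.2)) ω)
      set a := pushf P (fun z : X1 × X2 × Y1 => (z.1, z.2.2)) (ω.1, ω.2.2) with ha
      set b := pushf P (fun z : X1 × X2 × Y1 => (z.2.1, z.2.2)) (ω.2.1, ω.2.2) with hb
      set c := pushf P (fun z : X1 × X2 × Y1 => z.2.2) ω.2.2 with hc
      set d := pushf P (fun z : X1 × X2 × Y1 => z.2.1) ω.2.1 with hd
      have ht : (0:ℝ) < a * b / (P ω * c) := by positivity
      have hlog : Real.log (b / (d * c)) - Real.log (P ω / (d * a))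
          = Real.log (a * b / (P ω * c)) := by
        rw [logdiv h23 h2 h3, logdiv hpos h2 h13,
          Real.log_div (by positivity) (by positivity),
          Real.log_mul h13.ne' h23.ne', Real.log_mul hpos.ne' h3.ne']
        ring
      rw [e1, ← mul_sub, hlog]
      have hle := Real.log_le_sub_one_of_pos ht
      have heq : P ω * (a * b / (P ω * c)) = a * b / c := by
        field_simp
      nlinarith [mul_le_mul_of_nonneg_left hle hpos.le]
  have bound : ∑ ω, ((if P ω = 0 then 0 else
      pushf P (fun z : X1 × X2 × Y1 => (z.1, z.2.2)) (ω.1, ω.2.2)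
        * pushf P (fun z : X1 × X2 × Y1 => (z.2.1, z.2.2)) (ω.2.1, ω.2.2)
        / pushf P (fun z : X1 × X2 × Y1 => z.2.2) ω.2.2) - P ω) ≤ 0 := by
    rw [Finset.sum_sub_distrib, hsum, sub_nonpos]
    have step1 : ∑ ω, (if P ω = 0 then 0 else
        pushf P (fun z : X1 × X2 × Y1 => (z.1, z.2.2)) (ω.1, ω.2.2)
          * pushf P (fun z : X1 × X2 × Y1 => (z.2.1, z.2.2)) (ω.2.1, ω.2.2)
          / pushf P (fun z : X1 × X2 × Y1 => z.2.2) ω.2.2)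
        ≤ ∑ ω : X1 × X2 × Y1, (if pushf P (fun z : X1 × X2 × Y1 => z.2.2) ω.2.2 = 0 then 0 else
        pushf P (fun z : X1 × X2 × Y1 => (z.1, z.2.2)) (ω.1, ω.2.2)
          * pushf P (fun z : X1 × X2 × Y1 => (z.2.1, z.2.2)) (ω.2.1, ω.2.2)
          / pushf P (fun z : X1 × X2 × Y1 => z.2.2) ω.2.2) := by
      refine Finset.sum_le_sum fun ω _ => ?_
      rcases (hnn ω).eq_or_lt with h0 | hpos
      · rw [if_pos h0.symm]
        split
        · exact le_rfl
        · exact div_nonneg (mul_nonneg (pushf_nonneg P hnn _ _) (pushf_nonneg P hnn _ _))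
            (pushf_nonneg P hnn _ _)
      · have h3 : 0 < pushf P (fun z : X1 × X2 × Y1 => z.2.2) ω.2.2 :=
          lt_of_lt_of_le hpos (le_pushf P hnn (fun z => z.2.2) ω)
        rw [if_neg hpos.ne', if_neg h3.ne']
    have step2 : ∑ ω : X1 × X2 × Y1, (if pushf P (fun z : X1 × X2 × Y1 => z.2.2) ω.2.2 = 0 then 0 else
        pushf P (fun z : X1 × X2 × Y1 => (z.1, z.2.2)) (ω.1, ω.2.2)
          * pushf P (fun z : X1 × X2 × Y1 => (z.2.1, z.2.2)) (ω.2.1, ω.2.2)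
          / pushf P (fun z : X1 × X2 × Y1 => z.2.2) ω.2.2) = 1 := by
      simp only [Fintype.sum_prod_type]
      rw [Finset.sum_comm]
      rw [Finset.sum_congr rfl fun x2 _ => Finset.sum_comm]
      rw [Finset.sum_comm]
      have key2 : ∀ y : Y1, ∑ x2 : X2, ∑ x1 : X1,
          (if pushf P (fun z : X1 × X2 × Y1 => z.2.2) y = 0 then 0 else
            pushf P (fun z : X1 × X2 × Y1 => (z.1, z.2.2)) (x1, y)
              * pushf P (fun z : X1 × X2 × Y1 => (z.2.1, z.2.2)) (x2, y)
              / pushf P (fun z : X1 × X2 × Y1 => z.2.2) y)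
          = pushf P (fun z : X1 × X2 × Y1 => z.2.2) y := by
        intro y
        by_cases hy : pushf P (fun z : X1 × X2 × Y1 => z.2.2) y = 0
        · simp [hy]
        · simp only [if_neg hy]
          have m1 : ∑ x1 : X1, pushf P (fun z : X1 × X2 × Y1 => (z.1, z.2.2)) (x1, y)
              = pushf P (fun z : X1 × X2 × Y1 => z.2.2) y :=
            sum_pushf_pair_left P (fun z => z.1) (fun z => z.2.2) y
          have m2 : ∑ x2 : X2, pushf P (fun z : X1 × X2 × Y1 => (z.2.1, z.2.2)) (x2, y)
              = pushf P (fun z : X1 × X2 × Y1 => z.2.2) y :=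
            sum_pushf_pair_left P (fun z => z.2.1) (fun z => z.2.2) y
          have inner : ∀ x2 : X2, ∑ x1 : X1,
              pushf P (fun z : X1 × X2 × Y1 => (z.1, z.2.2)) (x1, y)
                * pushf P (fun z : X1 × X2 × Y1 => (z.2.1, z.2.2)) (x2, y)
                / pushf P (fun z : X1 × X2 × Y1 => z.2.2) y
              = (∑ x1 : X1, pushf P (fun z : X1 × X2 × Y1 => (z.1, z.2.2)) (x1, y))
                * pushf P (fun z : X1 × X2 × Y1 => (z.2.1, z.2.2)) (x2, y)
                / pushf P (fun z : X1 × X2 × Y1 => z.2.2) y := by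
            intro x2
            rw [← Finset.sum_div, ← Finset.sum_mul]
          rw [Finset.sum_congr rfl fun x2 _ => inner x2, ← Finset.sum_div, ← Finset.mul_sum,
            m1, m2]
          field_simp
      rw [Finset.sum_congr rfl fun y _ => key2 y, sum_pushf_total, hsum]
    linarith [step1, step2.le]
  linarith [key, bound]

end MainAux

section TransferAux

variable {X1 X2 Y1 : Type*} [Fintype X1] [DecidableEq X1] [Fintype X2] [DecidableEq X2]
  [Fintype Y1] [DecidableEq Y1]

lemma mutI_transfer (P P' : X1 × X2 × Y1 → ℝ)
    (hmarg : pushf P (fun z => (z.2.1, z.2.2)) = pushf P' (fun z => (z.2.1, z.2.2))) :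
    mutI P (fun z => z.2.1) (fun z => z.2.2)
      = mutI P' (fun z => z.2.1) (fun z => z.2.2) := by
  have h2 : pushf P (fun z : X1 × X2 × Y1 => z.2.1) = pushf P' (fun z => z.2.1) := by
    funext a
    rw [← sum_pushf_pair_right P (fun z => z.2.1) (fun z => z.2.2) a,
      ← sum_pushf_pair_right P' (fun z => z.2.1) (fun z => z.2.2) a, hmarg]
  have h3 : pushf P (fun z : X1 × X2 × Y1 => z.2.2) = pushf P' (fun z => z.2.2) := by
    funext b
    rw [← sum_pushf_pair_left P (fun z => z.2.1) (fun z => z.2.2) b,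
      ← sum_pushf_pair_left P' (fun z => z.2.1) (fun z => z.2.2) b, hmarg]
  unfold mutI
  rw [hmarg, h2, h3]

end TransferAux

/-- if `P_{X̂2,Ŷ1} = P_{X̂2',Ŷ1'}` and `I(X̂2;Ŷ1) = R2` (computed under `P`),
then `f1(ρ,λ,P,P') = f2(ρ,λ,P,P')`. -/
theorem stmt4 {X1 X2 Y1 : Type*} [Fintype X1] [DecidableEq X1] [Fintype X2] [DecidableEq X2]
    [Fintype Y1] [DecidableEq Y1]
    (q1 : X1 → X2 → Y1 → ℝ) (hq_pos : ∀ x1 x2 y, 0 < q1 x1 x2 y)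
    (hq_sum : ∀ x1 x2, ∑ y, q1 x1 x2 y = 1)
    (ρ lam : ℝ) (hρ0 : 0 ≤ ρ) (hρ1 : ρ ≤ 1) (hlam0 : 0 ≤ lam) (hlam1 : lam ≤ 1)
    (R2 : ℝ) (P P' : X1 × X2 × Y1 → ℝ) (hP : IsPMF P) (hP' : IsPMF P')
    (hmarg : pushf P (fun z => (z.2.1, z.2.2)) = pushf P' (fun z => (z.2.1, z.2.2)))
    (hR2 : mutI P (fun z => z.2.1) (fun z => z.2.2) = R2) :
    f1Fun q1 R2 ρ lam P P' = f2Fun q1 R2 ρ lam P P' := by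
  have hR2' : mutI P' (fun z => z.2.1) (fun z => z.2.2) = R2 := by
    rw [← mutI_transfer P P' hmarg]; exact hR2
  have hmono : R2 ≤ mutI P (fun z => z.2.1) (fun z => (z.1, z.2.2)) := by
    rw [← hR2]; exact mono2 P hP
  have hmono' : R2 ≤ mutI P' (fun z => z.2.1) (fun z => (z.1, z.2.2)) := by
    rw [← hR2']; exact mono2 P' hP'
  have hchain := chain3 P' hP'.1
  have hmax1 : max (mutI P (fun z => z.2.1) (fun z => (z.1, z.2.2)) - R2)
      ((1 - ρ * lam) * (mutI P (fun z => z.2.1) (fun z => (z.1, z.2.2)) - R2))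
      = mutI P (fun z => z.2.1) (fun z => (z.1, z.2.2)) - R2 := by
    apply max_eq_left
    nlinarith [mul_nonneg hρ0 hlam0]
  have hA : (1 - ρ) * mutI P' (fun z => z.2.1) (fun z => z.2.2)
      + ρ * mutI P' (fun z => z.2.1) (fun z => (z.1, z.2.2)) - R2
      = ρ * (mutI P' (fun z => z.2.1) (fun z => (z.1, z.2.2)) - R2) := by
    linear_combination (1 - ρ) * hR2'
  have hmax2 : max (max ((1 - ρ) * mutI P' (fun z => z.2.1) (fun z => z.2.2)
        + ρ * mutI P' (fun z => z.2.1) (fun z => (z.1, z.2.2)) - R2)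
      (ρ * (mutI P' (fun z => z.2.1) (fun z => (z.1, z.2.2)) - R2)))
      (ρ * lam * (mutI P' (fun z => z.2.1) (fun z => (z.1, z.2.2)) - R2))
      = ρ * (mutI P' (fun z => z.2.1) (fun z => (z.1, z.2.2)) - R2) := by
    rw [hA, max_self]
    apply max_eq_left
    nlinarith [mul_nonneg (mul_nonneg hρ0 (sub_nonneg.mpr hlam1)) (sub_nonneg.mpr hmono')]
  rw [f1Fun, f2Fun, hmax1, hmax2]
  linear_combination ρ * hchain + ρ * hR2'
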